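/- arXiv:1405.6925 — 2 statements merged into one kernel-verified Lean document; each statement's English description precedes it below -/
import Mathlib

section
/- Let Γ ⊂ Sp(V) be finite, let Γ̲ be a minimal parabolic subgroup (rank one, i.e. dim V − dim V^{Γ̲} = 2), and let U = {v ∈ V^{Γ̲} : Γ_v = Γ̲}. Then the complement of U in V^{Γ̲} has complex codimension at least 2. -/
open Module

/-- The submodule of vectors fixed by every element of a subgroup `P` of `G`. -/
def fixedOf {V : Type*} [AddCommGroup V] [Module ℂ V]
    {G : Type*} [Group G] (ρ : G →* (V ≃ₗ[ℂ] V)) (P : Subgroup G) : Submodule ℂ V where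
  carrier := {v | ∀ g ∈ P, ρ g v = v}
  add_mem' := by
    intro a b ha hb g hg
    simp [map_add, ha g hg, hb g hg]
  zero_mem' := by intro g _; simp
  smul_mem' := by
    intro c a ha g hg
    simp [map_smul, ha g hg]


lemma even_finrank_of_alt_nondeg (V : Type*) [AddCommGroup V] [Module ℂ V]
    [FiniteDimensional ℂ V] (ω : LinearMap.BilinForm ℂ V) (halt : ω.IsAlt)
    (hnd : ω.Nondegenerate) : Even (finrank ℂ V) := by
  by_contra hodd
  rw [Nat.not_even_iff_odd] at hodd
  let b := finBasis ℂ V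
  set M := LinearMap.BilinForm.toMatrix b ω with hM
  have hdet : M.det ≠ 0 := (LinearMap.BilinForm.nondegenerate_iff_det_ne_zero b).mp hnd
  have hskew : M.transpose = -M := by
    ext i j
    simp only [Matrix.transpose_apply, Matrix.neg_apply, hM, LinearMap.BilinForm.toMatrix_apply]
    rw [← halt.neg_eq]
  have h2 : M.det = -M.det := by
    conv_lhs => rw [← Matrix.det_transpose, hskew, Matrix.det_neg]
    simp [hodd.neg_one_pow]
  apply hdet; have := h2; ring_nf at this ⊢; linear_combination this/2

lemma mem_fixedOf {V : Type*} [AddCommGroup V] [Module ℂ V]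
    {G : Type*} [Group G] (ρ : G →* (V ≃ₗ[ℂ] V)) (P : Subgroup G) (v : V) :
    v ∈ fixedOf ρ P ↔ ∀ g ∈ P, ρ g v = v := Iff.rfl

lemma fixedOf_anti {V : Type*} [AddCommGroup V] [Module ℂ V]
    {G : Type*} [Group G] (ρ : G →* (V ≃ₗ[ℂ] V)) {P Q : Subgroup G} (h : P ≤ Q) :
    fixedOf ρ Q ≤ fixedOf ρ P := fun v hv g hg => hv g (h hg)

lemma fixed_restrict_nondeg
    (V : Type*) [AddCommGroup V] [Module ℂ V] [FiniteDimensional ℂ V]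
    (ω : LinearMap.BilinForm ℂ V) (hnd : ω.Nondegenerate)
    (G : Type*) [Group G] [Finite G] (ρ : G →* (V ≃ₗ[ℂ] V))
    (hsymp : ∀ g : G, ∀ x y : V, ω (ρ g x) (ρ g y) = ω x y)
    (H : Subgroup G) : (ω.restrict (fixedOf ρ H)).Nondegenerate := by
  haveI : Fintype H := Fintype.ofFinite H
  refine LinearMap.BilinForm.Nondegenerate.ofSeparatingLeft ?_
  intro x hx
  have hcard : (Fintype.card H : ℂ) ≠ 0 := by
    exact_mod_cast Nat.cast_ne_zero.mpr Fintype.card_ne_zero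
  ext
  apply hnd.1
  intro u
  -- average of u
  set w : V := (Fintype.card H : ℂ)⁻¹ • ∑ h : H, ρ (h : G) u with hw
  have hwfix : w ∈ fixedOf ρ H := by
    intro g hg
    rw [hw, map_smul]
    congr 1
    rw [map_sum]
    have : ∀ h : H, ρ ((⟨g, hg⟩ * h : H) : G) u = ρ (g : G) (ρ (h : G) u) := by
      intro h
      rw [Subgroup.coe_mul, map_mul]
      rfl
    calc ∑ h : H, ρ (g : G) (ρ (h : G) u)
        = ∑ h : H, ρ (((⟨g, hg⟩ : H) * h : H) : G) u := by
          refine Finset.sum_congr rfl fun h _ => (this h).symm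
      _ = ∑ h : H, ρ (h : G) u :=
          Fintype.sum_equiv (Equiv.mulLeft (⟨g, hg⟩ : H)) _ _ (fun h => rfl)
  have hxw : ω (x : V) w = ω (x : V) u := by
    rw [hw, map_smul]
    have : ∀ h : H, ω (x : V) (ρ (h : G) u) = ω (x : V) u := by
      intro h
      have hfix : ρ (h : G) (x : V) = (x : V) := x.2 (h : G) h.2
      calc ω (x : V) (ρ (h : G) u) = ω (ρ (h : G) (x : V)) (ρ (h : G) u) := by rw [hfix]
        _ = ω (x : V) u := hsymp _ _ _
    rw [map_sum]
    simp only [this]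
    rw [Finset.sum_const, Finset.card_univ, smul_eq_mul, nsmul_eq_mul]
    field_simp
  rw [← hxw]
  exact hx ⟨w, hwfix⟩

/-- Let `Γ̲` be a minimal parabolic subgroup of a finite group `Γ ⊂ Sp(V)` and
`U = {v ∈ V^{Γ̲} : Γ_v = Γ̲}`. Then the complement of `U` in `V^{Γ̲}` is contained in a
finite union of linear subspaces of `V^{Γ̲}` of codimension at least 2. -/
theorem complement_of_regular_locus_codim_two
    (V : Type*) [AddCommGroup V] [Module ℂ V] [FiniteDimensional ℂ V]
    (ω : LinearMap.BilinForm ℂ V) (halt : ω.IsAlt) (hnd : ω.Nondegenerate)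
    (G : Type*) [Group G] [Finite G] (ρ : G →* (V ≃ₗ[ℂ] V))
    (hsymp : ∀ g : G, ∀ x y : V, ω (ρ g x) (ρ g y) = ω x y)
    (P : Subgroup G)
    (hpar : ∃ v : V, ∀ g : G, g ∈ P ↔ ρ g v = v)
    (hmin : finrank ℂ (fixedOf ρ P) + 2 = finrank ℂ V) :
    ∃ (k : ℕ) (W : Fin k → Submodule ℂ V),
      (∀ j, W j ≤ fixedOf ρ P ∧ finrank ℂ (W j) + 2 ≤ finrank ℂ (fixedOf ρ P)) ∧
      (fixedOf ρ P : Set V) \ {v : V | v ∈ fixedOf ρ P ∧ ∀ g : G, ρ g v = v ↔ g ∈ P}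
        ⊆ ⋃ j, (W j : Set V) := by
  classical
  haveI : Fintype G := Fintype.ofFinite G
  obtain ⟨v₀, hv₀⟩ := hpar
  -- evenness of fixed spaces
  have heven : ∀ H : Subgroup G, Even (finrank ℂ (fixedOf ρ H)) := by
    intro H
    have hndr := fixed_restrict_nondeg V ω hnd G ρ hsymp H
    have haltr : (ω.restrict (fixedOf ρ H)).IsAlt := fun x => halt x
    exact even_finrank_of_alt_nondeg _ _ haltr hndr
  -- the family of enlarged fixed spaces
  let F : G → Submodule ℂ V := fun g => fixedOf ρ (Subgroup.closure ({g} ∪ (P : Set G)))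
  have hFle : ∀ g, F g ≤ fixedOf ρ P := by
    intro g
    refine fixedOf_anti ρ ?_
    exact fun x hx => Subgroup.subset_closure (Set.mem_union_right _ hx)
  have hFbound : ∀ g, g ∉ P → finrank ℂ (F g) + 2 ≤ finrank ℂ (fixedOf ρ P) := by
    intro g hg
    have hv₀P : v₀ ∈ fixedOf ρ P := fun h hh => (hv₀ h).mp hh
    have hv₀F : v₀ ∉ F g := by
      intro hmem
      have hgin : g ∈ Subgroup.closure ({g} ∪ (P : Set G)) :=
        Subgroup.subset_closure (Set.mem_union_left _ rfl)
      exact hg ((hv₀ g).mpr (hmem g hgin))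
    have hlt : F g < fixedOf ρ P := lt_of_le_of_ne (hFle g) (fun h => hv₀F (h ▸ hv₀P))
    have hrlt : finrank ℂ (F g) < finrank ℂ (fixedOf ρ P) :=
      Submodule.finrank_lt_finrank_of_lt hlt
    obtain ⟨m, hm⟩ := heven (Subgroup.closure ({g} ∪ (P : Set G)))
    obtain ⟨n, hn⟩ := heven P
    have hm2 : finrank ℂ (F g) = m + m := hm
    omega
  -- index over elements not in P
  let S := {g : G // g ∉ P}
  refine ⟨Fintype.card S, fun j => F ((Fintype.equivFin S).symm j : G), ?_, ?_⟩
  · intro j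
    exact ⟨hFle _, hFbound _ ((Fintype.equivFin S).symm j).2⟩
  · rintro v ⟨hvP, hvU⟩
    simp only [Set.mem_setOf_eq, not_and] at hvU
    have := hvU hvP
    push_neg at this
    obtain ⟨g, hg⟩ := this
    have hgcase : ρ g v = v ∧ g ∉ P := by
      rcases hg with ⟨h1, h2⟩ | ⟨h1, h2⟩
      · exact ⟨h1, h2⟩
      · exact absurd (hvP g h2) h1
    have hvF : v ∈ F g := by
      intro h hh
      induction hh using Subgroup.closure_induction with
      | mem x hx =>
        rcases hx with hx | hx
        · rw [Set.mem_singleton_iff] at hx; rw [hx]; exact hgcase.1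
        · exact hvP x hx
      | one => simp
      | mul x y _ _ hx hy =>
        rw [map_mul]
        show ρ x (ρ y v) = v
        rw [hy, hx]
      | inv x _ hx =>
        rw [map_inv]
        calc (ρ x)⁻¹ v = (ρ x)⁻¹ (ρ x v) := by rw [hx]
          _ = v := (ρ x).symm_apply_apply v
    refine Set.mem_iUnion.mpr ⟨(Fintype.equivFin S) ⟨g, hgcase.2⟩, ?_⟩
    simpa using hvF
end

section
/- Let Γ ⊂ Sp(V) be finite and for each conjugacy class B of minimal parabolic subgroups fix a representative Γ_B. Then the natural map ⨆_B (Γ_B \ {1})/Ñ_Γ(Γ_B) → S/Γ, sending an element of a minimal parabolic to its Γ-conjugacy class, is a bijection onto the set of Γ-conjugacy classes of symplectic reflections. -/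
open Module

/-- `P` is a minimal parabolic subgroup: the stabilizer of some vector, whose fixed space
has codimension 2. -/
def IsMinParabolic {V : Type*} [AddCommGroup V] [Module ℂ V] [FiniteDimensional ℂ V]
    {G : Type*} [Group G] (ρ : G →* (V ≃ₗ[ℂ] V)) (P : Subgroup G) : Prop :=
  (∃ v : V, ∀ g : G, g ∈ P ↔ ρ g v = v) ∧
    finrank ℂ (fixedOf ρ P) + 2 = finrank ℂ V

section Aux

variable {V : Type*} [AddCommGroup V] [Module ℂ V] [FiniteDimensional ℂ V]
variable {G : Type*} [Group G]

/-- membership in ker (1 - f) iff fixed. -/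
lemma mem_ker_one_sub_iff (f : V ≃ₗ[ℂ] V) (v : V) :
    v ∈ LinearMap.ker (1 - (f : V →ₗ[ℂ] V)) ↔ f v = v := by
  rw [LinearMap.mem_ker, LinearMap.sub_apply, Module.End.one_apply, sub_eq_zero, eq_comm]
  exact Iff.rfl

lemma rho_mul_apply (ρ : G →* (V ≃ₗ[ℂ] V)) (a b : G) (v : V) :
    ρ (a * b) v = ρ a (ρ b v) := by rw [map_mul]; rfl

lemma rho_inv_apply (ρ : G →* (V ≃ₗ[ℂ] V)) (g : G) (v : V) :
    ρ g⁻¹ (ρ g v) = v := by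
  rw [← rho_mul_apply, inv_mul_cancel, map_one]; rfl

/-- A symplectic transformation of finite order cannot have `rank (1 - f) = 1`. -/
lemma symplectic_rank_ne_one (ω : LinearMap.BilinForm ℂ V) (halt : ω.IsAlt)
    (hnd : ω.Nondegenerate) (f : V ≃ₗ[ℂ] V)
    (hs : ∀ x y : V, ω (f x) (f y) = ω x y)
    (n : ℕ) (hn : 0 < n) (hfn : ∀ x : V, (f ^ n) x = x) :
    finrank ℂ (LinearMap.range (1 - (f : V →ₗ[ℂ] V))) ≠ 1 := by
  intro h1
  set T : V →ₗ[ℂ] V := 1 - (f : V →ₗ[ℂ] V) with hT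
  obtain ⟨u₀, hu₀, hspan⟩ := finrank_eq_one_iff'.mp h1
  set u : V := (u₀ : V) with hu
  have hune : u ≠ 0 := fun h => hu₀ (Subtype.ext h)
  have hc : ∀ x : V, ∃ c : ℂ, T x = c • u := by
    intro x
    obtain ⟨c, hc⟩ := hspan ⟨T x, LinearMap.mem_range_self T x⟩
    exact ⟨c, by simpa using congrArg Subtype.val hc.symm⟩
  choose c hcx using hc
  have hTx : ∀ x : V, T x = x - f x := by
    intro x; simp [hT, LinearMap.sub_apply]
  -- key symplectic relation
  have key : ∀ x y : V, c y * ω x u = - (c x * ω u y) := by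
    intro x y
    have h0 := hs x y
    have hfx : f x = x - c x • u := by rw [← hcx x, hTx x]; abel
    have hfy : f y = y - c y • u := by rw [← hcx y, hTx y]; abel
    rw [hfx, hfy] at h0
    simp only [map_sub, map_smul, LinearMap.sub_apply, LinearMap.smul_apply,
      smul_eq_mul] at h0
    have huu : ω u u = 0 := halt u
    linear_combination -h0 + c x * c y * huu
  have hy0 : ∃ y₀ : V, c y₀ ≠ 0 := by
    by_contra h
    push_neg at h
    have hT0 : T = 0 := by
      ext x; rw [hcx x, h x, zero_smul]; rfl
    rw [hT0, LinearMap.range_zero] at h1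
    rw [finrank_bot] at h1
    exact absurd h1 (by norm_num)
  obtain ⟨y₀, hy₀⟩ := hy0
  set d : ℂ := -(ω u y₀) / c y₀ with hd_def
  have hxu : ∀ x : V, ω x u = c x * d := by
    intro x
    have hk := key x y₀
    rw [hd_def]
    field_simp
    linear_combination hk
  have hd : d ≠ 0 := by
    intro hd0
    apply hune
    apply hnd.1 u
    intro x
    have h2 : ω x u = 0 := by rw [hxu x, hd0, mul_zero]
    have h3 := halt.neg_eq x u
    rw [h2] at h3
    simpa using h3.symm
  have hcu : c u = 0 := by
    have h4 := hxu u
    rw [halt u] at h4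
    rcases mul_eq_zero.mp h4.symm with h | h
    · exact h
    · exact absurd h hd
  have hfu : f u = u := by
    have h5 := hcx u
    rw [hcu, zero_smul, hTx] at h5
    exact (sub_eq_zero.mp h5).symm
  have hfx : ∀ x : V, f x = x - c x • u := by
    intro x
    have h6 := hcx x
    rw [hTx] at h6
    rw [← h6]; abel
  have hiter : ∀ (m : ℕ) (x : V), (f ^ m) x = x - ((m : ℂ) * c x) • u := by
    intro m
    induction m with
    | zero => intro x; simp
    | succ k ih =>
      intro x
      have : (f ^ (k + 1)) x = f ((f ^ k) x) := by
        rw [pow_succ']; rfl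
      rw [this, ih x, map_sub, map_smul, hfx x, hfu]
      push_cast
      module
  have hfin := hfn y₀
  rw [hiter n y₀] at hfin
  have h7 : ((n : ℂ) * c y₀) • u = 0 := by
    have := sub_eq_self.mp hfin
    exact this
  rcases smul_eq_zero.mp h7 with h | h
  · rcases mul_eq_zero.mp h with h' | h'
    · exact absurd (Nat.cast_eq_zero.mp h') hn.ne'
    · exact hy₀ h'
  · exact hune h


/-- Pointwise stabilizer of a submodule. -/
def ptStab (ρ : G →* (V ≃ₗ[ℂ] V)) (W : Submodule ℂ V) : Subgroup G where
  carrier := {g | ∀ w ∈ W, ρ g w = w}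
  one_mem' := by intro w _; rw [map_one]; rfl
  mul_mem' := by
    intro a b ha hb w hw
    rw [rho_mul_apply, hb w hw, ha w hw]
  inv_mem' := by
    intro g hg w hw
    have := congrArg (ρ g⁻¹) (hg w hw)
    rw [rho_inv_apply] at this
    exact this.symm

lemma mem_ptStab_iff (ρ : G →* (V ≃ₗ[ℂ] V)) (W : Submodule ℂ V) (g : G) :
    g ∈ ptStab ρ W ↔ ∀ w ∈ W, ρ g w = w := Iff.rfl

/-- Generic vector: a vector of `W` whose stabilizer is the pointwise stabilizer of `W`. -/
lemma exists_generic [Finite G] (ρ : G →* (V ≃ₗ[ℂ] V)) (W : Submodule ℂ V) :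
    ∃ v ∈ W, ∀ g : G, ρ g v = v → ∀ w ∈ W, ρ g w = w := by
  classical
  set κ := {g : G // ¬ ∀ w ∈ W, ρ g w = w}
  have : Finite κ := Subtype.finite
  set p : κ → Submodule ℂ ↥W := fun g =>
    LinearMap.ker ((1 - ((ρ g.1 : V →ₗ[ℂ] V))).comp W.subtype) with hp
  have hne : ∀ g : κ, p g ≠ ⊤ := by
    intro g htop
    apply g.2
    intro w hw
    have : (⟨w, hw⟩ : ↥W) ∈ p g := htop ▸ Submodule.mem_top
    rw [hp] at this
    simp only [LinearMap.mem_ker, LinearMap.comp_apply, Submodule.subtype_apply,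
      LinearMap.sub_apply, Module.End.one_apply] at this
    have := sub_eq_zero.mp this
    exact this.symm
  have hcover : (⋃ g : κ, (p g : Set ↥W)) ≠ Set.univ := by
    intro hcov
    obtain ⟨g, hg⟩ := Subspace.exists_eq_top_of_iUnion_eq_univ hcov
    exact hne g hg
  obtain ⟨v₀, hv₀⟩ : ∃ v₀ : ↥W, ∀ g : κ, v₀ ∉ p g := by
    rcases Set.ne_univ_iff_exists_notMem _ |>.mp hcover with ⟨v₀, hv₀⟩
    exact ⟨v₀, fun g hg => hv₀ (Set.mem_iUnion.mpr ⟨g, hg⟩)⟩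
  refine ⟨(v₀ : V), v₀.2, ?_⟩
  intro g hgv
  by_contra h
  apply hv₀ ⟨g, h⟩
  rw [hp]
  simp only [LinearMap.mem_ker, LinearMap.comp_apply, Submodule.subtype_apply,
    LinearMap.sub_apply, Module.End.one_apply]
  rw [sub_eq_zero]
  exact hgv.symm

/-- Conjugation moves pointwise stabilizers. -/
lemma map_conj_ptStab (ρ : G →* (V ≃ₗ[ℂ] V)) (W : Submodule ℂ V) (g : G) :
    Subgroup.map (MulAut.conj g).toMonoidHom (ptStab ρ W)
      = ptStab ρ (W.map (ρ g : V →ₗ[ℂ] V)) := by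
  ext x
  simp only [Subgroup.mem_map, MulEquiv.coe_toMonoidHom, MulAut.conj_apply]
  constructor
  · rintro ⟨h, hh, rfl⟩
    intro w hw
    rcases Submodule.mem_map.mp hw with ⟨w', hw', rfl⟩
    have hco : ((ρ g : V →ₗ[ℂ] V)) w' = ρ g w' := rfl
    rw [hco, rho_mul_apply, rho_mul_apply, rho_inv_apply, hh w' hw']
  · intro hx
    refine ⟨g⁻¹ * x * g, ?_, by group⟩
    intro w hw
    have hgw : ρ g w ∈ W.map (ρ g : V →ₗ[ℂ] V) := Submodule.mem_map.mpr ⟨w, hw, rfl⟩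
    have := hx _ hgw
    rw [rho_mul_apply, rho_mul_apply, this, rho_inv_apply]

/-- Conjugation moves fixed spaces. -/
lemma map_ker_conj (ρ : G →* (V ≃ₗ[ℂ] V)) (s g : G) :
    (LinearMap.ker (1 - (ρ s : V →ₗ[ℂ] V))).map (ρ g : V →ₗ[ℂ] V)
      = LinearMap.ker (1 - (ρ (g * s * g⁻¹) : V →ₗ[ℂ] V)) := by
  ext v
  rw [mem_ker_one_sub_iff]
  constructor
  · rintro ⟨w, hw, rfl⟩
    rw [SetLike.mem_coe, mem_ker_one_sub_iff] at hw
    have hco : ((ρ g : V →ₗ[ℂ] V)) w = ρ g w := rfl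
    rw [hco, rho_mul_apply, rho_mul_apply, rho_inv_apply, hw]
  · intro hv
    refine ⟨ρ g⁻¹ v, ?_, ?_⟩
    · rw [SetLike.mem_coe, mem_ker_one_sub_iff]
      have : ρ (g * s * g⁻¹) v = v := hv
      have h2 := congrArg (ρ g⁻¹) this
      rw [rho_mul_apply, rho_mul_apply] at h2
      rwa [rho_inv_apply] at h2
    · show ρ g (ρ g⁻¹ v) = v
      have := rho_inv_apply ρ g⁻¹ v
      simpa using this


lemma fixedOf_le_ker (ρ : G →* (V ≃ₗ[ℂ] V)) (P : Subgroup G) (s : G) (hs : s ∈ P) :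
    fixedOf ρ P ≤ LinearMap.ker (1 - (ρ s : V →ₗ[ℂ] V)) := fun v hv =>
  (mem_ker_one_sub_iff (ρ s) v).mpr (hv s hs)

lemma parab_rank_two [Finite G] (ω : LinearMap.BilinForm ℂ V) (halt : ω.IsAlt)
    (hnd : ω.Nondegenerate) (ρ : G →* (V ≃ₗ[ℂ] V)) (hinj : Function.Injective ρ)
    (hsymp : ∀ g : G, ∀ x y : V, ω (ρ g x) (ρ g y) = ω x y)
    (P : Subgroup G) (hP : IsMinParabolic ρ P) (s : G) (hs : s ∈ P) (hs1 : s ≠ 1) :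
    finrank ℂ (LinearMap.range (1 - (ρ s : V →ₗ[ℂ] V))) = 2 := by
  obtain ⟨-, hdim⟩ := hP
  have hle := fixedOf_le_ker ρ P s hs
  have hkge : finrank ℂ (fixedOf ρ P) ≤ finrank ℂ (LinearMap.ker (1 - (ρ s : V →ₗ[ℂ] V))) :=
    Submodule.finrank_mono hle
  have hrn := LinearMap.finrank_range_add_finrank_ker (1 - (ρ s : V →ₗ[ℂ] V))
  have hne0 : finrank ℂ (LinearMap.range (1 - (ρ s : V →ₗ[ℂ] V))) ≠ 0 := by
    intro h0
    have hker : LinearMap.ker (1 - (ρ s : V →ₗ[ℂ] V)) = ⊤ := by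
      apply Submodule.eq_top_of_finrank_eq
      omega
    apply hs1
    apply hinj
    rw [map_one]
    apply LinearEquiv.ext
    intro x
    have hx : x ∈ LinearMap.ker (1 - (ρ s : V →ₗ[ℂ] V)) := hker ▸ Submodule.mem_top
    exact (mem_ker_one_sub_iff (ρ s) x).mp hx
  have hne1 : finrank ℂ (LinearMap.range (1 - (ρ s : V →ₗ[ℂ] V))) ≠ 1 := by
    apply symplectic_rank_ne_one ω halt hnd (ρ s) (hsymp s) (orderOf s) (orderOf_pos s)
    intro x
    rw [← map_pow, pow_orderOf_eq_one, map_one]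
    rfl
  omega

lemma ker_eq_fixedOf [Finite G] (ω : LinearMap.BilinForm ℂ V) (halt : ω.IsAlt)
    (hnd : ω.Nondegenerate) (ρ : G →* (V ≃ₗ[ℂ] V)) (hinj : Function.Injective ρ)
    (hsymp : ∀ g : G, ∀ x y : V, ω (ρ g x) (ρ g y) = ω x y)
    (P : Subgroup G) (hP : IsMinParabolic ρ P) (s : G) (hs : s ∈ P) (hs1 : s ≠ 1) :
    LinearMap.ker (1 - (ρ s : V →ₗ[ℂ] V)) = fixedOf ρ P := by
  have h2 := parab_rank_two ω halt hnd ρ hinj hsymp P hP s hs hs1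
  have hrn := LinearMap.finrank_range_add_finrank_ker (1 - (ρ s : V →ₗ[ℂ] V))
  have hdim := hP.2
  exact (Submodule.eq_of_le_of_finrank_eq (fixedOf_le_ker ρ P s hs) (by omega)).symm

lemma parab_eq_ptStab (ρ : G →* (V ≃ₗ[ℂ] V)) (P : Subgroup G) (hP : IsMinParabolic ρ P) :
    P = ptStab ρ (fixedOf ρ P) := by
  obtain ⟨v, hv⟩ := hP.1
  have hvmem : v ∈ fixedOf ρ P := fun g hg => (hv g).mp hg
  ext g
  constructor
  · intro hg w hw
    exact hw g hg
  · intro hg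
    exact (hv g).mpr (hg v hvmem)

end Aux

/-- The natural map `⨆_B (Γ_B \ {1})/Ñ_Γ(Γ_B) → S/Γ` is a bijection: every nontrivial
element of a minimal parabolic is a symplectic reflection; every symplectic reflection is
conjugate into one of the chosen representatives; and two nontrivial elements of the
representatives are `Γ`-conjugate iff they lie in the same representative and are conjugate
by an element of its normalizer. -/
theorem minimal_parabolic_classes_biject_with_reflection_classes
    (V : Type*) [AddCommGroup V] [Module ℂ V] [FiniteDimensional ℂ V]
    (ω : LinearMap.BilinForm ℂ V) (halt : ω.IsAlt) (hnd : ω.Nondegenerate)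
    (G : Type*) [Group G] [Finite G] (ρ : G →* (V ≃ₗ[ℂ] V))
    (hinj : Function.Injective ρ)
    (hsymp : ∀ g : G, ∀ x y : V, ω (ρ g x) (ρ g y) = ω x y)
    (ι : Type*) (rep : ι → Subgroup G)
    (hrep : ∀ i, IsMinParabolic ρ (rep i))
    (hnonconj : ∀ i j : ι,
      (∃ g : G, Subgroup.map (MulAut.conj g).toMonoidHom (rep i) = rep j) → i = j)
    (hcomplete : ∀ P : Subgroup G, IsMinParabolic ρ P →
      ∃ (i : ι) (g : G), Subgroup.map (MulAut.conj g).toMonoidHom P = rep i) :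
    (∀ i : ι, ∀ s ∈ rep i, s ≠ 1 →
        finrank ℂ (LinearMap.range (1 - (ρ s : V →ₗ[ℂ] V))) = 2) ∧
    (∀ s : G, finrank ℂ (LinearMap.range (1 - (ρ s : V →ₗ[ℂ] V))) = 2 →
        ∃ (i : ι) (g : G), g * s * g⁻¹ ∈ rep i) ∧
    (∀ (i j : ι) (s t : G), s ∈ rep i → s ≠ 1 → t ∈ rep j → t ≠ 1 →
        (∃ g : G, g * s * g⁻¹ = t) →
        i = j ∧ ∃ n ∈ Subgroup.normalizer (rep i : Set G), n * s * n⁻¹ = t) := by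
  classical
  refine ⟨?_, ?_, ?_⟩
  · intro i s hs hs1
    exact parab_rank_two ω halt hnd ρ hinj hsymp (rep i) (hrep i) s hs hs1
  · intro s hsrank
    set W := LinearMap.ker (1 - (ρ s : V →ₗ[ℂ] V)) with hW
    obtain ⟨v, hvW, hvgen⟩ := exists_generic ρ W
    set P := ptStab ρ W with hPdef
    have hsP : s ∈ P := fun w hw => (mem_ker_one_sub_iff (ρ s) w).mp hw
    have hPmin : IsMinParabolic ρ P := by
      constructor
      · exact ⟨v, fun g => ⟨fun hg => hg v hvW, fun hgv => hvgen g hgv⟩⟩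
      · have hWfix : fixedOf ρ P = W := by
          apply le_antisymm
          · intro x hx
            exact (mem_ker_one_sub_iff (ρ s) x).mpr (hx s hsP)
          · intro w hw g hg
            exact hg w hw
        have hrn := LinearMap.finrank_range_add_finrank_ker (1 - (ρ s : V →ₗ[ℂ] V))
        rw [hWfix, hW]
        omega
    obtain ⟨i, g, hmap⟩ := hcomplete P hPmin
    refine ⟨i, g, ?_⟩
    rw [← hmap]
    exact Subgroup.mem_map.mpr ⟨s, hsP, by simp⟩
  · rintro i j s t hsi hs1 htj ht1 ⟨g, hg⟩
    have hki := ker_eq_fixedOf ω halt hnd ρ hinj hsymp (rep i) (hrep i) s hsi hs1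
    have hkj := ker_eq_fixedOf ω halt hnd ρ hinj hsymp (rep j) (hrep j) t htj ht1
    have hij : Subgroup.map (MulAut.conj g).toMonoidHom (rep i) = rep j := by
      calc Subgroup.map (MulAut.conj g).toMonoidHom (rep i)
          = Subgroup.map (MulAut.conj g).toMonoidHom (ptStab ρ (fixedOf ρ (rep i))) := by
            rw [← parab_eq_ptStab ρ (rep i) (hrep i)]
        _ = Subgroup.map (MulAut.conj g).toMonoidHom
              (ptStab ρ (LinearMap.ker (1 - (ρ s : V →ₗ[ℂ] V)))) := by rw [hki]
        _ = ptStab ρ ((LinearMap.ker (1 - (ρ s : V →ₗ[ℂ] V))).map (ρ g : V →ₗ[ℂ] V)) :=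
            map_conj_ptStab ρ _ g
        _ = ptStab ρ (LinearMap.ker (1 - (ρ (g * s * g⁻¹) : V →ₗ[ℂ] V))) := by
            rw [map_ker_conj]
        _ = ptStab ρ (LinearMap.ker (1 - (ρ t : V →ₗ[ℂ] V))) := by rw [hg]
        _ = ptStab ρ (fixedOf ρ (rep j)) := by rw [hkj]
        _ = rep j := (parab_eq_ptStab ρ (rep j) (hrep j)).symm
    have hijeq : i = j := hnonconj i j ⟨g, hij⟩
    subst hijeq
    refine ⟨rfl, g, ?_, hg⟩
    rw [Subgroup.mem_normalizer_iff]
    intro h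
    constructor
    · intro hh
      rw [← hij]
      exact Subgroup.mem_map.mpr ⟨h, hh, by simp⟩
    · intro hh
      rw [← hij] at hh
      rcases Subgroup.mem_map.mp hh with ⟨h', hh', heq⟩
      simp only [MulEquiv.coe_toMonoidHom, MulAut.conj_apply] at heq
      have : h' = h := by
        have h1 := mul_right_cancel heq
        exact mul_left_cancel h1
      rwa [← this]
end
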